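/- Let l be an even integer with l > 4 and let ε : ℝ^× → {±1} be either the trivial character or the sign character. For b ∈ ℝ∖{0,−1} define W_+(b) = i^{l/2}·(1+b)^{−l/2}·∫₀^∞ (t+i)^{−l/2}·(t + bi/(b+1))^{−l/2}·t^{l/2−1}·log t dt and W^ε(b) = W_+(b) + ε(−1)·conj(W_+(b)). Then for every δ > 0 there is a constant C (depending only on δ and l) such that |b(b+1)|^δ · |W^ε(b)| ≤ C·(1+|b|)^{−l/2+2δ} for all b ∈ ℝ∖{0,−1}. -/

import Mathlib

/- Statement 17 (Lemma `Est-arci-log`): for `l` even, `l > 4`, and `ε` the trivial or the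
   sign character of `ℝ^×`, the function
   `W^ε(b) = W₊(b) + ε(−1)·conj(W₊(b))` satisfies, for every `δ > 0`,
   `|b(b+1)|^δ·|W^ε(b)| ≤ C·(1+|b|)^{−l/2+2δ}` for all `b ∈ ℝ∖{0,−1}`. -/

open Complex MeasureTheory

namespace Stmt17

/-- `W₊(b) = i^{l/2}(1+b)^{−l/2} ∫₀^∞ (t+i)^{−l/2}(t+bi/(b+1))^{−l/2} t^{l/2−1} log t dt`. -/
noncomputable def Wplus (l : ℤ) (b : ℝ) : ℂ :=
  I ^ (l / 2) * ((1 : ℂ) + (b : ℂ)) ^ (-(l / 2)) *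
    ∫ t in Set.Ioi (0 : ℝ),
      ((t : ℂ) + I) ^ (-(l / 2)) * ((t : ℂ) + (b : ℂ) * I / ((b : ℂ) + 1)) ^ (-(l / 2)) *
        (t : ℂ) ^ (l / 2 - 1) * (Real.log t : ℂ)

section Aux
open Real Set

lemma norm_fact (m : ℤ) (a t : ℝ) (ht : 0 < t) :
    ‖((t:ℂ)+I)^(-m) * ((t:ℂ)+(a:ℂ)*I)^(-m) * (t:ℂ)^(m-1) * (Real.log t : ℂ)‖
      = ‖(t:ℂ)+I‖ ^ (-(m:ℝ)) * ‖(t:ℂ)+(a:ℂ)*I‖ ^ (-(m:ℝ)) * t ^ ((m:ℝ)-1) * |Real.log t| := by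
  rw [norm_mul, norm_mul, norm_mul, norm_zpow, norm_zpow, norm_zpow, Complex.norm_real,
    Real.norm_eq_abs, Complex.norm_real, Real.norm_eq_abs, abs_of_pos ht,
    ← Real.rpow_intCast ‖(t:ℂ)+I‖, ← Real.rpow_intCast ‖(t:ℂ)+(a:ℂ)*I‖, ← Real.rpow_intCast t]
  push_cast
  ring

noncomputable def q (M γ : ℝ) (t : ℝ) : ℝ :=
  if t ≤ 1 then (2/γ) * t ^ (γ/2 - 1) else (2/(M-γ)) * t ^ (-(M-γ)/2 - 1)

lemma point_bound (m : ℤ) (γ : ℝ) (h0 : 0 < γ) (h1 : γ < (m:ℝ))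
    (a t : ℝ) (ha : a ≠ 0) (ht : 0 < t) :
    ‖((t:ℂ)+I)^(-m) * ((t:ℂ)+(a:ℂ)*I)^(-m) * (t:ℂ)^(m-1) * (Real.log t : ℂ)‖
      ≤ |a| ^ (-γ) * q (m:ℝ) γ t := by
  set M : ℝ := (m:ℝ) with hM
  have hMγ : 0 < M - γ := by linarith
  have ha' : 0 < |a| := abs_pos.2 ha
  -- basic norm facts
  have hA1 : (1:ℝ) ≤ ‖(t:ℂ)+I‖ := by
    have h := Complex.abs_im_le_norm ((t:ℂ)+I)
    simpa using h
  have hAt : t ≤ ‖(t:ℂ)+I‖ := by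
    have h := Complex.abs_re_le_norm ((t:ℂ)+I)
    simp only [Complex.add_re, Complex.ofReal_re, Complex.I_re, add_zero] at h
    rw [abs_of_pos ht] at h
    simpa using h
  have hBa : |a| ≤ ‖(t:ℂ)+(a:ℂ)*I‖ := by
    have h := Complex.abs_im_le_norm ((t:ℂ)+(a:ℂ)*I)
    simpa using h
  have hBt : t ≤ ‖(t:ℂ)+(a:ℂ)*I‖ := by
    have h := Complex.abs_re_le_norm ((t:ℂ)+(a:ℂ)*I)
    simp only [Complex.add_re, Complex.ofReal_re, Complex.mul_re, Complex.I_re,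
      Complex.ofReal_im, Complex.I_im, mul_zero, mul_one, zero_mul, zero_sub, sub_zero,
      mul_zero, add_zero] at h
    rw [abs_of_pos ht] at h
    simpa using h
  have hApos : (0:ℝ) < ‖(t:ℂ)+I‖ := lt_of_lt_of_le one_pos hA1
  have hBpos : (0:ℝ) < ‖(t:ℂ)+(a:ℂ)*I‖ := lt_of_lt_of_le ht hBt
  -- the B factor bound
  have hB : ‖(t:ℂ)+(a:ℂ)*I‖ ^ (-M) ≤ |a| ^ (-γ) * t ^ (γ - M) := by
    have : ‖(t:ℂ)+(a:ℂ)*I‖ ^ (-M) = ‖(t:ℂ)+(a:ℂ)*I‖ ^ (-γ) * ‖(t:ℂ)+(a:ℂ)*I‖ ^ (γ - M) := by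
      rw [← Real.rpow_add hBpos]; ring_nf
    rw [this]
    apply mul_le_mul
    · exact Real.rpow_le_rpow_of_nonpos ha' hBa (by linarith)
    · exact Real.rpow_le_rpow_of_nonpos ht hBt (by linarith)
    · positivity
    · positivity
  rw [norm_fact m a t ht]
  rcases le_or_gt t 1 with htle | htgt
  · -- small t
    have hlog : |Real.log t| ≤ (2/γ) * t ^ (-(γ/2)) := by
      rw [abs_of_nonpos (Real.log_nonpos ht.le htle), ← Real.log_inv]
      have := Real.log_le_rpow_div (x := t⁻¹) (by positivity) (show (0:ℝ) < γ/2 by linarith)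
      calc Real.log t⁻¹ ≤ (t⁻¹) ^ (γ/2) / (γ/2) := this
        _ = (2/γ) * t ^ (-(γ/2)) := by
            rw [Real.inv_rpow ht.le, ← Real.rpow_neg ht.le]
            field_simp
    calc ‖(t:ℂ)+I‖ ^ (-M) * ‖(t:ℂ)+(a:ℂ)*I‖ ^ (-M) * t ^ (M-1) * |Real.log t|
        ≤ 1 * (|a| ^ (-γ) * t ^ (γ - M)) * t ^ (M-1) * ((2/γ) * t ^ (-(γ/2))) := by
          gcongr
          · exact Real.rpow_le_one_of_one_le_of_nonpos hA1 (by linarith)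
      _ = |a| ^ (-γ) * ((2/γ) * (t ^ (γ - M) * t ^ (M-1) * t ^ (-(γ/2)))) := by ring
      _ = |a| ^ (-γ) * ((2/γ) * t ^ (γ/2 - 1)) := by
          rw [← Real.rpow_add ht, ← Real.rpow_add ht,
            show γ - M + (M - 1) + -(γ/2) = γ/2 - 1 by ring]
      _ = |a| ^ (-γ) * q M γ t := by rw [q, if_pos htle]
  · have hlog : |Real.log t| ≤ (2/(M-γ)) * t ^ ((M-γ)/2) := by
      rw [_root_.abs_of_nonneg (Real.log_nonneg htgt.le)]
      calc Real.log t ≤ t ^ ((M-γ)/2) / ((M-γ)/2) :=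
            Real.log_le_rpow_div ht.le (by linarith)
        _ = (2/(M-γ)) * t ^ ((M-γ)/2) := by field_simp
    have hA : ‖(t:ℂ)+I‖ ^ (-M) ≤ t ^ (-M) :=
      Real.rpow_le_rpow_of_nonpos ht hAt (by linarith)
    calc ‖(t:ℂ)+I‖ ^ (-M) * ‖(t:ℂ)+(a:ℂ)*I‖ ^ (-M) * t ^ (M-1) * |Real.log t|
        ≤ t ^ (-M) * (|a| ^ (-γ) * t ^ (γ - M)) * t ^ (M-1) * ((2/(M-γ)) * t ^ ((M-γ)/2)) := by
          gcongr
      _ = |a| ^ (-γ) * ((2/(M-γ)) * (t ^ (-M) * t ^ (γ - M) * t ^ (M-1) * t ^ ((M-γ)/2))) := by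
          ring
      _ = |a| ^ (-γ) * ((2/(M-γ)) * t ^ (-(M-γ)/2 - 1)) := by
          rw [← Real.rpow_add ht, ← Real.rpow_add ht, ← Real.rpow_add ht,
            show -M + (γ - M) + (M - 1) + (M-γ)/2 = -(M-γ)/2 - 1 by ring]
      _ = |a| ^ (-γ) * q M γ t := by rw [q, if_neg (not_le.2 htgt)]

lemma q_nonneg {M γ : ℝ} (hγ : 0 < γ) (hγM : γ < M) {t : ℝ} (ht : 0 < t) : 0 ≤ q M γ t := by
  unfold q
  have h : 0 < M - γ := by linarith
  split <;> positivity

lemma q_integrable {M γ : ℝ} (hγ : 0 < γ) (hγM : γ < M) :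
    IntegrableOn (q M γ) (Set.Ioi 0) := by
  have hsplit : Set.Ioi (0:ℝ) = Set.Ioc 0 1 ∪ Set.Ioi 1 := (Set.Ioc_union_Ioi_eq_Ioi (by norm_num)).symm
  rw [hsplit]
  apply MeasureTheory.IntegrableOn.union
  · have h1 : IntegrableOn (fun t : ℝ => (2/γ) * t ^ (γ/2 - 1)) (Set.Ioc 0 1) := by
      have := (intervalIntegral.intervalIntegrable_rpow' (a := 0) (b := 1) (r := γ/2-1)
        (by linarith)).const_mul (2/γ)
      rwa [intervalIntegrable_iff_integrableOn_Ioc_of_le (by norm_num)] at this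
    exact h1.congr_fun (fun t ht => by rw [q, if_pos ht.2]) measurableSet_Ioc
  · have h2 : IntegrableOn (fun t : ℝ => (2/(M-γ)) * t ^ (-(M-γ)/2 - 1)) (Set.Ioi 1) :=
      (integrableOn_Ioi_rpow_of_lt (by nlinarith) (by norm_num)).const_mul _
    exact h2.congr_fun (fun t ht => by rw [q, if_neg (not_le.2 ht)]) measurableSet_Ioi

lemma key (m : ℤ) (γ : ℝ) (h0 : 0 < γ) (h1 : γ < (m:ℝ)) :
    ∃ J : ℝ, 0 ≤ J ∧ ∀ a : ℝ, a ≠ 0 →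
      ‖∫ t in Set.Ioi (0:ℝ),
          ((t:ℂ)+I)^(-m) * ((t:ℂ)+(a:ℂ)*I)^(-m) * (t:ℂ)^(m-1) * (Real.log t : ℂ)‖
        ≤ J * |a| ^ (-γ) := by
  refine ⟨∫ t in Set.Ioi (0:ℝ), q (m:ℝ) γ t, ?_, ?_⟩
  · exact setIntegral_nonneg measurableSet_Ioi (fun t ht => q_nonneg h0 h1 ht)
  · intro a ha
    have ha' : 0 < |a| := abs_pos.2 ha
    have hg : Integrable (fun t => |a| ^ (-γ) * q (m:ℝ) γ t)
        (volume.restrict (Set.Ioi (0:ℝ))) := (q_integrable h0 h1).const_mul _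
    have hbd : ∀ᵐ (t : ℝ) ∂(volume.restrict (Set.Ioi (0:ℝ))),
        ‖((t:ℂ)+I)^(-m) * ((t:ℂ)+(a:ℂ)*I)^(-m) * (t:ℂ)^(m-1) * (Real.log t : ℂ)‖
          ≤ |a| ^ (-γ) * q (m:ℝ) γ t := by
      rw [ae_restrict_iff' measurableSet_Ioi]
      exact Filter.Eventually.of_forall (fun t ht => point_bound m γ h0 h1 a t ha ht)
    calc ‖∫ t in Set.Ioi (0:ℝ),
          ((t:ℂ)+I)^(-m) * ((t:ℂ)+(a:ℂ)*I)^(-m) * (t:ℂ)^(m-1) * (Real.log t : ℂ)‖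
        ≤ ∫ t in Set.Ioi (0:ℝ), |a| ^ (-γ) * q (m:ℝ) γ t :=
          MeasureTheory.norm_integral_le_of_norm_le hg hbd
      _ = (∫ t in Set.Ioi (0:ℝ), q (m:ℝ) γ t) * |a| ^ (-γ) := by
          rw [MeasureTheory.integral_const_mul]; ring

lemma pow_ratio {x y : ℝ} (s : ℝ) (hx : 0 < x) (h1 : x ≤ y) (h2 : y ≤ 3*x) :
    x ^ s ≤ 3 ^ |s| * y ^ s := by
  have hy : 0 < y := lt_of_lt_of_le hx h1
  have hxy : x / y ≤ 1 := div_le_one_of_le₀ h1 hy.le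
  have hxy0 : 0 < x / y := div_pos hx hy
  have key : (x/y) ^ s ≤ 3 ^ |s| := by
    calc (x/y) ^ s ≤ (x/y) ^ (-|s|) :=
          Real.rpow_le_rpow_of_exponent_ge hxy0 hxy (neg_abs_le s)
      _ = (y/x) ^ |s| := by
          rw [Real.rpow_neg hxy0.le, ← Real.inv_rpow hxy0.le, inv_div]
      _ ≤ 3 ^ |s| := by
          apply Real.rpow_le_rpow (by positivity) _ (abs_nonneg s)
          rw [div_le_iff₀ hx]; linarith
  calc x ^ s = (x/y) ^ s * y ^ s := by
        rw [Real.div_rpow hx.le hy.le, div_mul_cancel₀]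
        positivity
    _ ≤ 3 ^ |s| * y ^ s := by
        apply mul_le_mul_of_nonneg_right key (by positivity)

lemma alg {X Y Z : ℝ} (M δ δ' J : ℝ) (hX : 0 < X) (hXY : X ≤ Y) (hZ1 : Y ≤ Z)
    (hZ2 : Z ≤ 3*Y) (hd : δ' ≤ δ) (hJ : 0 ≤ J) :
    J * (X ^ (δ-δ') * Y ^ (δ+δ'-M)) ≤ (J * 3 ^ |2*δ-M|) * Z ^ (2*δ-M) := by
  have hY : 0 < Y := lt_of_lt_of_le hX hXY
  calc J * (X ^ (δ-δ') * Y ^ (δ+δ'-M))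
      ≤ J * (Y ^ (δ-δ') * Y ^ (δ+δ'-M)) := by
        apply mul_le_mul_of_nonneg_left _ hJ
        apply mul_le_mul_of_nonneg_right _ (by positivity)
        exact Real.rpow_le_rpow hX.le hXY (by linarith)
    _ = J * Y ^ (2*δ-M) := by
        rw [← Real.rpow_add hY, show δ - δ' + (δ+δ'-M) = 2*δ-M by ring]
    _ ≤ J * (3 ^ |2*δ-M| * Z ^ (2*δ-M)) := by
        apply mul_le_mul_of_nonneg_left _ hJ
        exact pow_ratio _ hY hZ1 hZ2
    _ = (J * 3 ^ |2*δ-M|) * Z ^ (2*δ-M) := by ring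

lemma combine1 {X Y : ℝ} (hX : 0 < X) (hY : 0 < Y) (δ δ' M J : ℝ) :
    X^δ * Y^δ * (2 * (Y^(-M) * (J * (X/Y)^(-δ')))) = 2*J*(X^(δ-δ') * Y^(δ+δ'-M)) := by
  have h1 : (X/Y)^(-δ') = X^(-δ') * Y^δ' := by
    rw [Real.div_rpow hX.le hY.le, Real.rpow_neg hX.le, Real.rpow_neg hY.le, div_eq_mul_inv, inv_inv]
  rw [h1, show δ-δ' = δ + (-δ') from by ring, show δ+δ'-M = δ+δ'+(-M) from by ring,
    Real.rpow_add hX, Real.rpow_add hY, Real.rpow_add hY]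
  ring

lemma combine2 {X Y : ℝ} (hX : 0 < X) (hY : 0 < Y) (δ δ' M J : ℝ) :
    Y^δ * X^δ * (2 * (X^(-M) * (J * (Y/X)^(-(M-δ'))))) = 2*J*(X^(δ-δ') * Y^(δ+δ'-M)) := by
  have hx1 : X^(M-δ') * X^(δ'-M) = 1 := by
    rw [← Real.rpow_add hX]; norm_num
  have h1 : (Y/X)^(-(M-δ')) = Y^(δ'-M) * X^(M-δ') := by
    rw [show -(M-δ') = δ'-M from by ring, Real.div_rpow hY.le hX.le,
      div_eq_iff (ne_of_gt (Real.rpow_pos_of_pos hX _)), mul_assoc, hx1, mul_one]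
  rw [h1, show δ-δ' = δ + -M + (M-δ') from by ring, show δ+δ'-M = δ + (δ'-M) from by ring,
    Real.rpow_add hX, Real.rpow_add hX, Real.rpow_add hY]
  ring

end Aux

open Real in
theorem statement17 (l : ℤ) (hleven : Even l) (hl : 4 < l)
    (e : ℝ) (he : e = 1 ∨ e = -1)  -- `e = ε(−1)`, `ε` trivial or the sign character
    (δ : ℝ) (hδ : 0 < δ) :
    ∃ C : ℝ, ∀ b : ℝ, b ≠ 0 → b ≠ -1 →
      |b * (b + 1)| ^ δ *
          ‖Wplus l b + (e : ℂ) * (starRingEnd ℂ) (Wplus l b)‖ ≤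
        C * (1 + |b|) ^ (-(l : ℝ) / 2 + 2 * δ) := by
  obtain ⟨k, hk⟩ := hleven
  have hk2 : l / 2 = k := by omega
  have hk3 : 3 ≤ k := by omega
  set M : ℝ := (k : ℝ) with hM
  have hM3 : (3:ℝ) ≤ M := by rw [hM]; exact_mod_cast hk3
  set δ' : ℝ := min δ 1 with hδ'def
  have hδ'0 : 0 < δ' := lt_min hδ one_pos
  have hδ'δ : δ' ≤ δ := min_le_left _ _
  have hδ'M : δ' < M := lt_of_le_of_lt (min_le_right _ _) (by linarith)
  obtain ⟨J₁, hJ₁0, hJ₁⟩ := key k δ' hδ'0 (by rw [← hM]; linarith)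
  obtain ⟨J₂, hJ₂0, hJ₂⟩ := key k (M - δ') (by linarith) (by rw [← hM]; linarith)
  refine ⟨2 * (max J₁ J₂) * 3 ^ |2*δ - M|, ?_⟩
  intro b hb0 hb1
  have hbb : b + 1 ≠ 0 := fun h => hb1 (by linarith)
  have hX : 0 < |b| := abs_pos.2 hb0
  have hY : 0 < |b+1| := abs_pos.2 hbb
  set a : ℝ := b / (b+1) with ha_def
  have ha : a ≠ 0 := div_ne_zero hb0 hbb
  have ha_abs : |a| = |b| / |b+1| := abs_div _ _
  have hbc : (b:ℂ) * I / ((b:ℂ)+1) = ((a:ℝ):ℂ) * I := by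
    rw [ha_def]; push_cast; ring
  have hW : Wplus l b = I ^ k * ((1:ℂ)+(b:ℂ)) ^ (-k) *
      ∫ t in Set.Ioi (0:ℝ), ((t:ℂ)+I)^(-k) * ((t:ℂ)+((a:ℝ):ℂ)*I)^(-k) *
        (t:ℂ)^(k-1) * (Real.log t : ℂ) := by
    simp only [Wplus, hk2, hbc]
  have hWnorm : ‖Wplus l b‖ = |b+1| ^ (-M) *
      ‖∫ t in Set.Ioi (0:ℝ), ((t:ℂ)+I)^(-k) * ((t:ℂ)+((a:ℝ):ℂ)*I)^(-k) *
        (t:ℂ)^(k-1) * (Real.log t : ℂ)‖ := by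
    rw [hW, norm_mul, norm_mul, norm_zpow, norm_zpow, Complex.norm_I, one_zpow, one_mul,
      show (1:ℂ)+(b:ℂ) = ((b+1:ℝ):ℂ) from by push_cast; ring, Complex.norm_real,
      Real.norm_eq_abs, ← Real.rpow_intCast |b+1|]
    norm_num
    exact Or.inl rfl
  have h2 : ‖Wplus l b + (e:ℂ) * (starRingEnd ℂ) (Wplus l b)‖
      ≤ 2 * ‖Wplus l b‖ := by
    have he1 : ‖(e:ℂ)‖ = 1 := by rcases he with rfl | rfl <;> simp
    calc ‖Wplus l b + (e:ℂ) * (starRingEnd ℂ) (Wplus l b)‖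
        ≤ ‖Wplus l b‖ + ‖(e:ℂ) * (starRingEnd ℂ) (Wplus l b)‖ := norm_add_le _ _
      _ = ‖Wplus l b‖ + ‖(e:ℂ)‖ * ‖(starRingEnd ℂ) (Wplus l b)‖ := by rw [norm_mul]
      _ = 2 * ‖Wplus l b‖ := by
          rw [he1, one_mul, Complex.norm_conj]
          ring
  have hexp : -(l:ℝ)/2 + 2*δ = 2*δ - M := by rw [hM]; push_cast [hk]; ring
  rw [hexp]
  have habsmul : |b*(b+1)|^δ = |b|^δ * |b+1|^δ := by
    rw [abs_mul, Real.mul_rpow (abs_nonneg _) (abs_nonneg _)]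
  have hZ1b : |b+1| ≤ 1 + |b| := by
    have h := abs_add_le b 1
    simp only [abs_one] at h
    linarith
  have honeb : 1 ≤ |b+1| + |b| := by
    have h := abs_add_le (b+1) (-b)
    rw [show b+1+-b = (1:ℝ) from by ring, abs_one, abs_neg] at h
    linarith
  rcases le_total |b| |b+1| with hc | hc
  · -- |b| ≤ |b+1|
    have hZ2 : 1 + |b| ≤ 3*|b+1| := by linarith
    calc |b*(b+1)|^δ * ‖Wplus l b + (e:ℂ) * (starRingEnd ℂ) (Wplus l b)‖
        = |b|^δ * |b+1|^δ *
            ‖Wplus l b + (e:ℂ) * (starRingEnd ℂ) (Wplus l b)‖ := by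
          rw [habsmul]
      _ ≤ |b|^δ * |b+1|^δ * (2 * (|b+1| ^ (-M) * (J₁ * |a| ^ (-δ')))) := by
          apply mul_le_mul_of_nonneg_left _ (by positivity)
          calc ‖Wplus l b + (e:ℂ) * (starRingEnd ℂ) (Wplus l b)‖
              ≤ 2 * ‖Wplus l b‖ := h2
            _ = 2 * (|b+1| ^ (-M) *
                ‖∫ t in Set.Ioi (0:ℝ), ((t:ℂ)+I)^(-k) * ((t:ℂ)+((a:ℝ):ℂ)*I)^(-k) *
                  (t:ℂ)^(k-1) * (Real.log t : ℂ)‖) := by rw [hWnorm]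
            _ ≤ 2 * (|b+1| ^ (-M) * (J₁ * |a| ^ (-δ'))) := by
                apply mul_le_mul_of_nonneg_left _ (by norm_num)
                exact mul_le_mul_of_nonneg_left (hJ₁ a ha) (by positivity)
      _ = 2*J₁*(|b|^(δ-δ') * |b+1|^(δ+δ'-M)) := by
          rw [ha_abs]; exact combine1 hX hY δ δ' M J₁
      _ ≤ (2*J₁ * 3^|2*δ-M|) * (1+|b|)^(2*δ-M) :=
          alg M δ δ' (2*J₁) hX hc hZ1b hZ2 hδ'δ (by positivity)
      _ ≤ (2*(max J₁ J₂) * 3^|2*δ-M|) * (1+|b|)^(2*δ-M) := by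
          apply mul_le_mul_of_nonneg_right _ (by positivity)
          have h3 : (0:ℝ) ≤ 3^|2*δ-M| := by positivity
          nlinarith [le_max_left J₁ J₂]
  · -- |b+1| ≤ |b|
    have hZ1' : |b| ≤ 1 + |b| := by linarith
    have hZ2' : 1 + |b| ≤ 3*|b| := by linarith
    calc |b*(b+1)|^δ * ‖Wplus l b + (e:ℂ) * (starRingEnd ℂ) (Wplus l b)‖
        = |b|^δ * |b+1|^δ *
            ‖Wplus l b + (e:ℂ) * (starRingEnd ℂ) (Wplus l b)‖ := by
          rw [habsmul]
      _ ≤ |b|^δ * |b+1|^δ * (2 * (|b+1| ^ (-M) * (J₂ * |a| ^ (-(M-δ'))))) := by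
          apply mul_le_mul_of_nonneg_left _ (by positivity)
          calc ‖Wplus l b + (e:ℂ) * (starRingEnd ℂ) (Wplus l b)‖
              ≤ 2 * ‖Wplus l b‖ := h2
            _ = 2 * (|b+1| ^ (-M) *
                ‖∫ t in Set.Ioi (0:ℝ), ((t:ℂ)+I)^(-k) * ((t:ℂ)+((a:ℝ):ℂ)*I)^(-k) *
                  (t:ℂ)^(k-1) * (Real.log t : ℂ)‖) := by rw [hWnorm]
            _ ≤ 2 * (|b+1| ^ (-M) * (J₂ * |a| ^ (-(M-δ')))) := by
                apply mul_le_mul_of_nonneg_left _ (by norm_num)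
                exact mul_le_mul_of_nonneg_left (hJ₂ a ha) (by positivity)
      _ = 2*J₂*(|b+1|^(δ-δ') * |b|^(δ+δ'-M)) := by
          rw [ha_abs]; exact combine2 hY hX δ δ' M J₂
      _ ≤ (2*J₂ * 3^|2*δ-M|) * (1+|b|)^(2*δ-M) :=
          alg M δ δ' (2*J₂) hY hc hZ1' hZ2' hδ'δ (by positivity)
      _ ≤ (2*(max J₁ J₂) * 3^|2*δ-M|) * (1+|b|)^(2*δ-M) := by
          apply mul_le_mul_of_nonneg_right _ (by positivity)
          have h3 : (0:ℝ) ≤ 3^|2*δ-M| := by positivity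
          nlinarith [le_max_right J₁ J₂]

end Stmt17
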